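/- Let u ∈ ℤ^m \ {0}, δ = (δ₁,…,δ_n) ∈ (ℝ_{>0})^n, and define R'(u,δ) := { A ∈ [0,1]^{mn} : there exists v ∈ ℤⁿ with gcd(u, v_j) = 1 for all j and |A_{*,j}·u − v_j| < δ_j for all 1 ≤ j ≤ n }. Then the mn-dimensional Lebesgue measure of R'(u,δ) satisfies (φ(|u|)/|u|)^n · ∏_{j=1}^n (2δ_j) ≤ L^{mn}(R'(u,δ)) ≤ ∏_{j=1}^n (2δ_j), assuming each δ_j ≤ 1/2. -/

import Mathlib

open MeasureTheory

open Set
open MeasureTheory Set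

def Tset (V : Set ℤ) (δ : ℝ) : Set ℝ := ⋃ v ∈ V, Ioo ((v : ℝ) - δ) ((v : ℝ) + δ)

lemma measurable_Tset (V : Set ℤ) (δ : ℝ) : MeasurableSet (Tset V δ) :=
  MeasurableSet.biUnion (to_countable V) (fun _ _ => measurableSet_Ioo)

lemma mem_Tset {V : Set ℤ} {δ x : ℝ} : x ∈ Tset V δ ↔ ∃ v ∈ V, |x - (v:ℝ)| < δ := by
  simp only [Tset, mem_iUnion, mem_Ioo, exists_prop, abs_sub_lt_iff]
  constructor
  · rintro ⟨v, hv, h1, h2⟩; exact ⟨v, hv, by linarith, by linarith⟩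
  · rintro ⟨v, hv, h1, h2⟩; exact ⟨v, hv, by linarith, by linarith⟩

lemma Tset_periodic {V : Set ℤ} {δ : ℝ} {N : ℕ}
    (hV : ∀ v : ℤ, v + (N:ℤ) ∈ V ↔ v ∈ V) (x : ℝ) :
    x + (N:ℝ) ∈ Tset V δ ↔ x ∈ Tset V δ := by
  simp only [mem_Tset]
  constructor
  · rintro ⟨v, hv, h⟩
    refine ⟨v - N, (hV (v - N)).mp (by simpa using hv), ?_⟩
    have e : x - ((v:ℝ) - (N:ℝ)) = x + N - v := by ring
    push_cast
    rw [e]; exact h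
  · rintro ⟨v, hv, h⟩
    refine ⟨v + N, (hV v).mpr hv, ?_⟩
    have e : x + (N:ℝ) - ((v:ℝ) + (N:ℝ)) = x - v := by ring
    push_cast
    rw [e]; exact h

/-- measure of a periodic set over any period interval. -/
lemma vol_periodic {T : Set ℝ} (hT : MeasurableSet T) {p : ℝ} (hp : 0 < p)
    (hper : ∀ x, x + p ∈ T ↔ x ∈ T) (a : ℝ) :
    volume (T ∩ Ioc a (a + p)) = volume (T ∩ Ioc 0 p) := by
  set f : ℝ → ℝ := T.indicator (fun _ => (1:ℝ)) with hf
  have hfper : Function.Periodic f p := by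
    intro x
    rcases Classical.em (x ∈ T) with h | h
    · rw [hf, Set.indicator_of_mem h, Set.indicator_of_mem ((hper x).mpr h)]
    · rw [hf, Set.indicator_of_notMem h,
        Set.indicator_of_notMem (fun hx => h ((hper x).mp hx))]
  have key := hfper.intervalIntegral_add_eq a 0
  have hcalc : ∀ b : ℝ, ∫ x in b..(b + p), f x = (volume (T ∩ Ioc b (b + p))).toReal := by
    intro b
    rw [intervalIntegral.integral_of_le (by linarith)]
    rw [MeasureTheory.setIntegral_indicator hT]
    rw [MeasureTheory.setIntegral_const]
    rw [smul_eq_mul, mul_one, inter_comm]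
    rfl
  have h1 := hcalc a
  have h2 := hcalc 0
  rw [zero_add] at h2
  rw [h1] at key
  have h2' : ∫ x in (0:ℝ)..(0 + p), f x = (volume (T ∩ Ioc 0 p)).toReal := by
    rw [zero_add]; exact h2
  rw [h2'] at key
  have fin1 : volume (T ∩ Ioc a (a + p)) ≠ ⊤ :=
    ne_top_of_le_ne_top (by simp [Real.volume_Ioc]) (measure_mono inter_subset_right)
  have fin2 : volume (T ∩ Ioc 0 p) ≠ ⊤ :=
    ne_top_of_le_ne_top (by simp [Real.volume_Ioc]) (measure_mono inter_subset_right)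
  exact (ENNReal.toReal_eq_toReal_iff' fin1 fin2).mp key
lemma count_upper {V : Set ℤ} {δ : ℝ} (hδ0 : 0 < δ) {N : ℕ} (hN : 0 < N) :
    volume (Tset V δ ∩ Ioc (0:ℝ) N) ≤ ENNReal.ofReal ((N:ℝ) * (2 * δ)) := by
  have cover : Tset V δ ∩ Ioc (0:ℝ) N ⊆
      ⋃ w ∈ Finset.Icc (1:ℤ) N,
        (Ioc ((w:ℝ) - 1) ((w:ℝ) - 1 + δ) ∪ Ioc ((w:ℝ) - δ) (w:ℝ)) := by
    rintro x ⟨hxT, hx0, hxN⟩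
    obtain ⟨v, -, hv⟩ := mem_Tset.mp hxT
    rw [abs_sub_lt_iff] at hv
    refine mem_iUnion₂.mpr ⟨⌈x⌉, ?_, ?_⟩
    · simp only [Finset.mem_Icc]
      constructor
      · have : (0:ℤ) < ⌈x⌉ := Int.lt_ceil.mpr (by push_cast; linarith)
        omega
      · exact Int.ceil_le.mpr (by exact_mod_cast hxN)
    · have h1 : ((⌈x⌉:ℝ)) < x + 1 := Int.ceil_lt_add_one x
      have h2 : x ≤ (⌈x⌉:ℝ) := Int.le_ceil x
      rcases le_or_gt (⌈x⌉:ℤ) v with hc | hc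
      · right
        have : ((⌈x⌉:ℤ):ℝ) ≤ (v:ℝ) := by exact_mod_cast hc
        exact ⟨by linarith [hv.2], h2⟩
      · left
        have : (v:ℝ) ≤ ((⌈x⌉:ℤ):ℝ) - 1 := by
          have h3 : v ≤ ⌈x⌉ - 1 := by omega
          have h4 : ((v:ℤ):ℝ) ≤ ((⌈x⌉ - 1 : ℤ):ℝ) := Int.cast_le.mpr h3
          push_cast at h4 ⊢; linarith
        exact ⟨by linarith, by linarith [hv.1]⟩
  calc volume (Tset V δ ∩ Ioc (0:ℝ) N) ≤
      ∑ w ∈ Finset.Icc (1:ℤ) N,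
        volume (Ioc ((w:ℝ) - 1) ((w:ℝ) - 1 + δ) ∪ Ioc ((w:ℝ) - δ) (w:ℝ)) :=
        (measure_mono cover).trans (measure_biUnion_finset_le _ _)
    _ ≤ ∑ w ∈ Finset.Icc (1:ℤ) N, ENNReal.ofReal (2 * δ) := by
        refine Finset.sum_le_sum fun w _ => ?_
        refine (measure_union_le _ _).trans ?_
        rw [Real.volume_Ioc, Real.volume_Ioc]
        rw [← ENNReal.ofReal_add (by linarith) (by linarith)]
        apply ENNReal.ofReal_le_ofReal; ring_nf; linarith
    _ = ENNReal.ofReal ((N:ℝ) * (2 * δ)) := by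
        rw [Finset.sum_const, Int.card_Icc]
        have : ((N:ℤ) + 1 - 1).toNat = N := by omega
        rw [this, nsmul_eq_mul, ← ENNReal.ofReal_natCast N,
          ← ENNReal.ofReal_mul (by positivity)]
lemma count_lower {δ : ℝ} (hδ0 : 0 < δ) (hδ : δ ≤ 1/2) {N : ℕ} (hN : 0 < N) :
    ENNReal.ofReal ((N.totient : ℝ) * (2 * δ)) ≤
      volume (Tset {v : ℤ | Nat.gcd N v.natAbs = 1} δ ∩ Ioc (0:ℝ) N) := by
  set V : Set ℤ := {v : ℤ | Nat.gcd N v.natAbs = 1} with hV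
  rcases eq_or_lt_of_le (Nat.succ_le_of_lt hN) with h1 | h2
  · -- N = 1
    have hN1 : N = 1 := h1.symm
    subst hN1
    have hsub : Ioo (0:ℝ) δ ∪ Ioo (1 - δ) 1 ⊆ Tset V δ ∩ Ioc (0:ℝ) 1 := by
      rintro x (⟨h1, h2⟩ | ⟨h1, h2⟩)
      · exact ⟨mem_Tset.mpr ⟨0, by simp [hV], by rw [abs_of_pos (by simpa using h1)]; simpa⟩,
          h1, by linarith⟩
      · exact ⟨mem_Tset.mpr ⟨1, by simp [hV], by rw [abs_of_nonpos (by push_cast; linarith)]; push_cast; linarith⟩,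
          by linarith, h2.le⟩
    calc ENNReal.ofReal ((Nat.totient 1 : ℝ) * (2 * δ))
        = ENNReal.ofReal δ + ENNReal.ofReal δ := by
          rw [← ENNReal.ofReal_add hδ0.le hδ0.le]
          congr 1; simp [Nat.totient_one]; ring
      _ = volume (Ioo (0:ℝ) δ ∪ Ioo (1 - δ) 1) := by
          rw [measure_union (by
            apply Set.disjoint_left.mpr
            rintro x ⟨-, h2⟩ ⟨h3, -⟩; linarith) measurableSet_Ioo]
          rw [Real.volume_Ioo, Real.volume_Ioo]
          congr 1 <;> [skip; congr 1] <;> ring_nf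
      _ ≤ _ := by
          refine measure_mono ?_
          simpa using hsub
  · -- N ≥ 2
    have hN2 : 2 ≤ N := h2
    set F : Finset ℕ := (Finset.range N).filter N.Coprime with hF
    have hcard : F.card = N.totient := (Nat.totient_eq_card_coprime N).symm
    have hmem : ∀ r ∈ F, 1 ≤ r ∧ r < N := by
      intro r hr
      rw [hF, Finset.mem_filter, Finset.mem_range] at hr
      refine ⟨?_, hr.1⟩
      rcases Nat.eq_zero_or_pos r with rfl | h; · simp [Nat.coprime_zero_right] at hr; omega
      exact h
    have hsub : (⋃ r ∈ F, Ioo ((r:ℝ) - δ) ((r:ℝ) + δ)) ⊆ Tset V δ ∩ Ioc (0:ℝ) N := by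
      intro x hx
      rw [mem_iUnion₂] at hx
      obtain ⟨r, hr, hx1, hx2⟩ := hx
      obtain ⟨hr1, hr2⟩ := hmem r hr
      have hrc : N.Coprime r := (Finset.mem_filter.mp hr).2
      have hr1' : (1:ℝ) ≤ r := by exact_mod_cast hr1
      have hr2' : (r:ℝ) ≤ (N:ℝ) - 1 := by
        have : r + 1 ≤ N := hr2
        have := (Nat.cast_le (α := ℝ)).mpr this
        push_cast at this; linarith
      constructor
      · refine mem_Tset.mpr ⟨(r:ℤ), ?_, ?_⟩
        · simp only [hV, mem_setOf_eq, Int.natAbs_natCast]; exact hrc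
        · rw [abs_sub_lt_iff]; push_cast; constructor <;> linarith
      · constructor <;> [linarith; linarith]
    have hdisj : (F : Set ℕ).PairwiseDisjoint (fun r : ℕ => Ioo ((r:ℝ) - δ) ((r:ℝ) + δ)) := by
      intro r hr s hs hrs
      apply Set.disjoint_left.mpr
      rintro x ⟨h1, h2⟩ ⟨h3, h4⟩
      have h5 : (1:ℝ) ≤ |(r:ℝ) - s| := by
        rcases lt_or_gt_of_ne hrs with h | h
        · have hc : (r:ℝ) + 1 ≤ s := by exact_mod_cast Nat.succ_le_of_lt h
          rw [abs_of_nonpos (by linarith)]; linarith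
        · have hc : (s:ℝ) + 1 ≤ r := by exact_mod_cast Nat.succ_le_of_lt h
          rw [abs_of_nonneg (by linarith)]; linarith
      have h6 : |(r:ℝ) - s| < 2 * δ := by
        rw [abs_sub_lt_iff]; constructor <;> linarith
      linarith
    calc ENNReal.ofReal ((N.totient : ℝ) * (2 * δ))
        = ∑ _r ∈ F, ENNReal.ofReal (2 * δ) := by
          rw [Finset.sum_const, hcard, nsmul_eq_mul, ← ENNReal.ofReal_natCast,
            ← ENNReal.ofReal_mul (by positivity)]
      _ = volume (⋃ r ∈ F, Ioo ((r:ℝ) - δ) ((r:ℝ) + δ)) := by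
          rw [measure_biUnion_finset hdisj (fun _ _ => measurableSet_Ioo)]
          refine (Finset.sum_congr rfl fun r _ => ?_).symm
          rw [Real.volume_Ioo]; congr 1; ring
      _ ≤ _ := measure_mono hsub

lemma vol_affine_slice {c : ℤ} {N : ℕ} (hc : c.natAbs = N) (hN : 0 < N) (t : ℝ)
    {T : Set ℝ} (hT : MeasurableSet T) (hper : ∀ x, x + (N:ℝ) ∈ T ↔ x ∈ T) :
    volume (Icc (0:ℝ) 1 ∩ (fun x => (c:ℝ) * x + t) ⁻¹' T) =
      ENNReal.ofReal (1 / (N:ℝ)) * volume (T ∩ Ioc (0:ℝ) N) := by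
  have hNpos : (0:ℝ) < N := by exact_mod_cast hN
  have key : ∀ a : ℝ, volume (Icc a (a + (N:ℝ)) ∩ T) = volume (T ∩ Ioc (0:ℝ) N) := by
    intro a
    rw [inter_comm,
      measure_congr (MeasureTheory.ae_eq_set_inter (ae_eq_refl T) Ioc_ae_eq_Icc.symm)]
    exact vol_periodic hT hNpos hper a
  rcases Int.natAbs_eq c with h | h
  · have hcr : (c:ℝ) = (N:ℝ) := by rw [h, hc]; push_cast; ring
    rw [hcr]
    have e1 : Icc (0:ℝ) 1 ∩ (fun x => (N:ℝ) * x + t) ⁻¹' T =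
        ((N:ℝ) * ·) ⁻¹' ((· + t) ⁻¹' (Icc t (t + (N:ℝ)) ∩ T)) := by
      ext x
      simp only [mem_inter_iff, mem_preimage, mem_Icc]
      constructor
      · rintro ⟨⟨h1, h2⟩, h3⟩; exact ⟨⟨by nlinarith, by nlinarith⟩, h3⟩
      · rintro ⟨⟨h1, h2⟩, h3⟩; exact ⟨⟨by nlinarith, by nlinarith⟩, h3⟩
    rw [e1, Real.volume_preimage_mul_left (by positivity), measure_preimage_add_right, key t]
    congr 1
    rw [abs_of_nonneg (by positivity), one_div]
  · have hcr : (c:ℝ) = -(N:ℝ) := by rw [h, hc]; push_cast; ring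
    rw [hcr]
    have e1 : Icc (0:ℝ) 1 ∩ (fun x => -(N:ℝ) * x + t) ⁻¹' T =
        ((-(N:ℝ)) * ·) ⁻¹' ((· + t) ⁻¹' (Icc (t - (N:ℝ)) t ∩ T)) := by
      ext x
      simp only [mem_inter_iff, mem_preimage, mem_Icc]
      constructor
      · rintro ⟨⟨h1, h2⟩, h3⟩; exact ⟨⟨by nlinarith, by nlinarith⟩, h3⟩
      · rintro ⟨⟨h1, h2⟩, h3⟩; exact ⟨⟨by nlinarith, by nlinarith⟩, h3⟩
    rw [e1, Real.volume_preimage_mul_left (by simp; positivity), measure_preimage_add_right]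
    have hk := key (t - (N:ℝ))
    rw [sub_add_cancel] at hk
    rw [hk]
    congr 1
    rw [inv_neg, abs_neg, abs_of_nonneg (by positivity), one_div]

lemma gcd_natAbs_add (N : ℕ) (v : ℤ) :
    Nat.gcd N (v + (N:ℤ)).natAbs = Nat.gcd N v.natAbs := by
  have h1 : ∀ w : ℤ, Nat.gcd N w.natAbs = Int.gcd (N:ℤ) w := fun w => by
    simp [Int.gcd]
  rw [h1, h1]
  apply Nat.dvd_antisymm
  · refine Int.natCast_dvd_natCast.mp ?_
    push_cast
    refine Int.dvd_coe_gcd (Int.gcd_dvd_left _ _) ?_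
    have h2 : ((Int.gcd (N:ℤ) (v + N) : ℕ) : ℤ) ∣ v + N := Int.gcd_dvd_right _ _
    have h3 : ((Int.gcd (N:ℤ) (v + N) : ℕ) : ℤ) ∣ (N:ℤ) := Int.gcd_dvd_left _ _
    simpa using dvd_sub h2 h3
  · refine Int.natCast_dvd_natCast.mp ?_
    push_cast
    refine Int.dvd_coe_gcd (Int.gcd_dvd_left _ _) ?_
    have h2 : ((Int.gcd (N:ℤ) v : ℕ) : ℤ) ∣ v := Int.gcd_dvd_right _ _
    have h3 : ((Int.gcd (N:ℤ) v : ℕ) : ℤ) ∣ (N:ℤ) := Int.gcd_dvd_left _ _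
    exact dvd_add h2 h3

/-- The volume of a column set, sandwiched. -/
lemma vol_column {m : ℕ} (hm : 0 < m) (u : Fin m → ℤ) (g N : ℕ)
    (hg : ∀ v : ℤ, Nat.gcd N v.natAbs = 1 → Nat.gcd g v.natAbs = 1)
    (hN : 0 < N) (hex : ∃ i, (u i).natAbs = N)
    {δ : ℝ} (hδ0 : 0 < δ) (hδ : δ ≤ 1/2) :
    ENNReal.ofReal ((N.totient : ℝ) / N * (2 * δ)) ≤
        volume {a : Fin m → ℝ | (∀ i, a i ∈ Icc (0:ℝ) 1) ∧
          ∃ v : ℤ, Nat.gcd g v.natAbs = 1 ∧ |(∑ i, a i * (u i : ℝ)) - (v:ℝ)| < δ} ∧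
      volume {a : Fin m → ℝ | (∀ i, a i ∈ Icc (0:ℝ) 1) ∧
          ∃ v : ℤ, Nat.gcd g v.natAbs = 1 ∧ |(∑ i, a i * (u i : ℝ)) - (v:ℝ)| < δ} ≤
        ENNReal.ofReal (2 * δ) := by
  obtain ⟨k, rfl⟩ := Nat.exists_eq_succ_of_ne_zero hm.ne'
  obtain ⟨i0, hi0⟩ := hex
  set c : ℤ := u i0 with hcdef
  have hNpos : (0:ℝ) < N := by exact_mod_cast hN
  set Vcop : Set ℤ := {v : ℤ | Nat.gcd N v.natAbs = 1} with hVcop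
  have hVcop_inv : ∀ v : ℤ, v + (N:ℤ) ∈ Vcop ↔ v ∈ Vcop := by
    intro v; simp only [hVcop, mem_setOf_eq, gcd_natAbs_add]
  have hVuniv_inv : ∀ v : ℤ, v + (N:ℤ) ∈ (univ : Set ℤ) ↔ v ∈ (univ : Set ℤ) := by simp
  -- generic computation of the volume of a column-type set
  have main : ∀ W : Set ℤ, (∀ v : ℤ, v + (N:ℤ) ∈ W ↔ v ∈ W) →
      volume {a : Fin (k+1) → ℝ | (∀ i, a i ∈ Icc (0:ℝ) 1) ∧
          (∑ i, a i * (u i : ℝ)) ∈ Tset W δ} =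
      ENNReal.ofReal (1 / (N:ℝ)) * volume (Tset W δ ∩ Ioc (0:ℝ) N) := by
    intro W hW
    set T : Set ℝ := Tset W δ with hT
    have hTm : MeasurableSet T := measurable_Tset W δ
    have hTper : ∀ x : ℝ, x + (N:ℝ) ∈ T ↔ x ∈ T := by
      intro x
      have := Tset_periodic (δ := δ) hW x
      simpa using this
    set e := MeasurableEquiv.piFinSuccAbove (fun _ : Fin (k+1) => ℝ) i0 with he
    set f : ℝ × (Fin k → ℝ) → ℝ :=
      fun p => (c:ℝ) * p.1 + ∑ i, p.2 i * (u (i0.succAbove i) : ℝ) with hfdef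
    have hf : Measurable f := by
      apply Measurable.add
      · exact measurable_fst.const_mul _
      · exact Finset.measurable_sum Finset.univ fun i _ =>
          (measurable_snd.eval).mul_const _
    set D : Set (ℝ × (Fin k → ℝ)) :=
      ({p : ℝ × (Fin k → ℝ) | p.1 ∈ Icc (0:ℝ) 1} ∩
        {p : ℝ × (Fin k → ℝ) | ∀ i, p.2 i ∈ Icc (0:ℝ) 1}) ∩ f ⁻¹' T with hD
    have h2m : MeasurableSet {p : ℝ × (Fin k → ℝ) | ∀ i, p.2 i ∈ Icc (0:ℝ) 1} := by
      have : {p : ℝ × (Fin k → ℝ) | ∀ i, p.2 i ∈ Icc (0:ℝ) 1} =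
          ⋂ i, {p : ℝ × (Fin k → ℝ) | p.2 i ∈ Icc (0:ℝ) 1} := by
        ext p; simp
      rw [this]
      exact MeasurableSet.iInter fun i => (measurable_snd.eval) measurableSet_Icc
    have hDm : MeasurableSet D :=
      ((measurable_fst measurableSet_Icc).inter h2m).inter (hf hTm)
    -- the set equals `e ⁻¹' D`
    have hCeq : {a : Fin (k+1) → ℝ | (∀ i, a i ∈ Icc (0:ℝ) 1) ∧
        (∑ i, a i * (u i : ℝ)) ∈ T} = e ⁻¹' D := by
      ext a
      have happ : e a = (a i0, fun j => a (i0.succAbove j)) := rfl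
      rw [mem_preimage, happ]
      have hsum : (∑ i, a i * (u i : ℝ)) =
          (c:ℝ) * a i0 + ∑ j, a (i0.succAbove j) * (u (i0.succAbove j) : ℝ) := by
        rw [Fin.sum_univ_succAbove (fun i => a i * (u i : ℝ)) i0]
        ring
      simp only [hD, mem_inter_iff, mem_setOf_eq, mem_preimage, hfdef]
      rw [← hsum]
      constructor
      · rintro ⟨h1, h2⟩
        exact ⟨⟨h1 i0, fun i => h1 _⟩, h2⟩
      · rintro ⟨⟨h1, h2⟩, h3⟩
        exact ⟨(Fin.forall_iff_succAbove i0).mpr ⟨h1, h2⟩, h3⟩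
    rw [hCeq]
    have hmp : MeasurePreserving e volume volume :=
      MeasureTheory.volume_preserving_piFinSuccAbove (fun _ : Fin (k+1) => ℝ) i0
    rw [hmp.measure_preimage hDm.nullMeasurableSet]
    -- Fubini over the product
    rw [MeasureTheory.Measure.volume_eq_prod, Measure.prod_apply_symm hDm]
    have hslice : ∀ y : Fin k → ℝ,
        volume ((fun x => (x, y)) ⁻¹' D) =
          Set.indicator {y : Fin k → ℝ | ∀ i, y i ∈ Icc (0:ℝ) 1}
            (fun _ => ENNReal.ofReal (1 / (N:ℝ)) * volume (T ∩ Ioc (0:ℝ) N)) y := by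
      intro y
      by_cases hy : ∀ i, y i ∈ Icc (0:ℝ) 1
      · rw [Set.indicator_of_mem (show y ∈ {y : Fin k → ℝ | ∀ i, y i ∈ Icc (0:ℝ) 1} from hy)]
        have : (fun x => (x, y)) ⁻¹' D =
            Icc (0:ℝ) 1 ∩ (fun x => (c:ℝ) * x + (∑ i, y i * (u (i0.succAbove i) : ℝ))) ⁻¹' T := by
          ext x
          simp only [hD, mem_preimage, mem_inter_iff, mem_setOf_eq, hfdef]
          tauto
        rw [this]
        exact vol_affine_slice hi0 hN _ hTm hTper
      · rw [Set.indicator_of_notMem (show y ∉ {y : Fin k → ℝ | ∀ i, y i ∈ Icc (0:ℝ) 1} from hy)]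
        have : (fun x => (x, y)) ⁻¹' D = ∅ := by
          ext x
          simp only [hD, mem_preimage, mem_inter_iff, mem_setOf_eq, mem_empty_iff_false,
            iff_false]
          rintro ⟨⟨-, h2⟩, -⟩
          exact hy h2
        rw [this, measure_empty]
    have h3m : MeasurableSet {y : Fin k → ℝ | ∀ i, y i ∈ Icc (0:ℝ) 1} := by
      have : {y : Fin k → ℝ | ∀ i, y i ∈ Icc (0:ℝ) 1} =
          ⋂ i, {y : Fin k → ℝ | y i ∈ Icc (0:ℝ) 1} := by ext y; simp
      rw [this]
      exact MeasurableSet.iInter fun i => (measurable_pi_apply i) measurableSet_Icc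
    rw [lintegral_congr hslice, lintegral_indicator h3m]
    rw [setLIntegral_const]
    have hcube : volume {y : Fin k → ℝ | ∀ i, y i ∈ Icc (0:ℝ) 1} = 1 := by
      have : {y : Fin k → ℝ | ∀ i, y i ∈ Icc (0:ℝ) 1} =
          Set.pi univ (fun _ : Fin k => Icc (0:ℝ) 1) := by
        ext y; simp [Set.mem_pi, Pi.le_def, forall_and]
      rw [this, volume_pi_pi]
      simp [Real.volume_Icc]
    rw [hcube, mul_one]
  -- now assemble
  set Cset := {a : Fin (k+1) → ℝ | (∀ i, a i ∈ Icc (0:ℝ) 1) ∧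
      ∃ v : ℤ, Nat.gcd g v.natAbs = 1 ∧ |(∑ i, a i * (u i : ℝ)) - (v:ℝ)| < δ} with hCset
  have hlow : {a : Fin (k+1) → ℝ | (∀ i, a i ∈ Icc (0:ℝ) 1) ∧
      (∑ i, a i * (u i : ℝ)) ∈ Tset Vcop δ} ⊆ Cset := by
    rintro a ⟨h1, h2⟩
    obtain ⟨v, hv, hav⟩ := mem_Tset.mp h2
    exact ⟨h1, v, hg v hv, hav⟩
  have hhigh : Cset ⊆ {a : Fin (k+1) → ℝ | (∀ i, a i ∈ Icc (0:ℝ) 1) ∧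
      (∑ i, a i * (u i : ℝ)) ∈ Tset univ δ} := by
    rintro a ⟨h1, v, -, hav⟩
    exact ⟨h1, mem_Tset.mpr ⟨v, trivial, hav⟩⟩
  constructor
  · calc ENNReal.ofReal ((N.totient : ℝ) / N * (2 * δ))
        = ENNReal.ofReal (1 / (N:ℝ)) * ENNReal.ofReal ((N.totient : ℝ) * (2 * δ)) := by
          rw [← ENNReal.ofReal_mul (by positivity)]
          congr 1; field_simp
      _ ≤ ENNReal.ofReal (1 / (N:ℝ)) * volume (Tset Vcop δ ∩ Ioc (0:ℝ) N) := by
          gcongr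
          exact count_lower hδ0 hδ hN
      _ = volume {a : Fin (k+1) → ℝ | (∀ i, a i ∈ Icc (0:ℝ) 1) ∧
            (∑ i, a i * (u i : ℝ)) ∈ Tset Vcop δ} := (main Vcop hVcop_inv).symm
      _ ≤ volume Cset := measure_mono hlow
  · calc volume Cset
        ≤ volume {a : Fin (k+1) → ℝ | (∀ i, a i ∈ Icc (0:ℝ) 1) ∧
            (∑ i, a i * (u i : ℝ)) ∈ Tset univ δ} := measure_mono hhigh
      _ = ENNReal.ofReal (1 / (N:ℝ)) * volume (Tset univ δ ∩ Ioc (0:ℝ) N) :=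
          main univ hVuniv_inv
      _ ≤ ENNReal.ofReal (1 / (N:ℝ)) * ENNReal.ofReal ((N:ℝ) * (2 * δ)) := by
          gcongr
          exact count_upper hδ0 hN
      _ = ENNReal.ofReal (2 * δ) := by
          rw [← ENNReal.ofReal_mul (by positivity)]
          congr 1; field_simp

/-- Measure bound in Lemma 5.4: the set `R'(u,δ)` of matrices (given by their columns) whose
columns satisfy `|A_{*,j}·u − v_j| < δ_j` for some `v` with `gcd(u, v_j) = 1` has Lebesgue
measure between `(φ(|u|)/|u|)^n ∏ 2δ_j` and `∏ 2δ_j`. -/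
theorem measure_R' (m n : ℕ) (hm : 0 < m) (hn : 0 < n)
    (u : Fin m → ℤ) (hu : u ≠ 0)
    (δ : Fin n → ℝ) (hδ_pos : ∀ j, 0 < δ j) (hδ_le : ∀ j, δ j ≤ 1 / 2) :
    ENNReal.ofReal
        (((Nat.totient (Finset.univ.sup fun i => (u i).natAbs) : ℝ) /
            (Finset.univ.sup fun i => (u i).natAbs : ℕ)) ^ n * ∏ j, (2 * δ j)) ≤
      volume {A : Fin n → Fin m → ℝ |
        (∀ j i, A j i ∈ Set.Icc (0 : ℝ) 1) ∧
        ∃ v : Fin n → ℤ, ∀ j,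
          Nat.gcd (Finset.univ.gcd fun i => (u i).natAbs) (v j).natAbs = 1 ∧
          |(∑ i, A j i * (u i : ℝ)) - (v j : ℝ)| < δ j} ∧
    volume {A : Fin n → Fin m → ℝ |
        (∀ j i, A j i ∈ Set.Icc (0 : ℝ) 1) ∧
        ∃ v : Fin n → ℤ, ∀ j,
          Nat.gcd (Finset.univ.gcd fun i => (u i).natAbs) (v j).natAbs = 1 ∧
          |(∑ i, A j i * (u i : ℝ)) - (v j : ℝ)| < δ j} ≤
      ENNReal.ofReal (∏ j, (2 * δ j)) := by
  haveI : NeZero m := ⟨hm.ne'⟩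
  set N : ℕ := Finset.univ.sup fun i => (u i).natAbs with hNdef
  set g : ℕ := Finset.univ.gcd fun i => (u i).natAbs with hgdef
  -- basic facts
  obtain ⟨i0, -, hi0⟩ := Finset.exists_mem_eq_sup (Finset.univ : Finset (Fin m))
    Finset.univ_nonempty (fun i => (u i).natAbs)
  have hex : ∃ i, (u i).natAbs = N := ⟨i0, hi0.symm⟩
  have hN : 0 < N := by
    obtain ⟨i, hi⟩ := Function.ne_iff.mp hu
    calc 0 < (u i).natAbs := Int.natAbs_pos.mpr hi
      _ ≤ N := Finset.le_sup (f := fun i => (u i).natAbs) (Finset.mem_univ i)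
  have hgN : g ∣ N := by
    rw [hgdef, hNdef, hi0]; exact Finset.gcd_dvd (Finset.mem_univ i0)
  have hg : ∀ v : ℤ, Nat.gcd N v.natAbs = 1 → Nat.gcd g v.natAbs = 1 :=
    fun v hv => Nat.Coprime.coprime_dvd_left hgN hv
  -- column sets
  set C : Fin n → Set (Fin m → ℝ) := fun j =>
    {a : Fin m → ℝ | (∀ i, a i ∈ Icc (0:ℝ) 1) ∧
      ∃ v : ℤ, Nat.gcd g v.natAbs = 1 ∧ |(∑ i, a i * (u i : ℝ)) - (v:ℝ)| < δ j} with hC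
  have hbounds : ∀ j : Fin n,
      ENNReal.ofReal ((N.totient : ℝ) / N * (2 * δ j)) ≤ volume (C j) ∧
        volume (C j) ≤ ENNReal.ofReal (2 * δ j) :=
    fun j => vol_column hm u g N hg hN hex (hδ_pos j) (hδ_le j)
  -- product structure
  have hSeq : {A : Fin n → Fin m → ℝ |
      (∀ j i, A j i ∈ Set.Icc (0 : ℝ) 1) ∧
      ∃ v : Fin n → ℤ, ∀ j,
        Nat.gcd g (v j).natAbs = 1 ∧
        |(∑ i, A j i * (u i : ℝ)) - (v j : ℝ)| < δ j} = Set.pi univ C := by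
    ext A
    simp only [mem_setOf_eq, Set.mem_pi, mem_univ, forall_true_left, hC]
    constructor
    · rintro ⟨h1, v, h2⟩
      exact fun j => ⟨h1 j, v j, h2 j⟩
    · intro h
      refine ⟨fun j => (h j).1, ?_⟩
      choose v hv using fun j => (h j).2
      exact ⟨v, hv⟩
  rw [hSeq, volume_pi_pi]
  have hofReal : ∀ (r : Fin n → ℝ), (∀ j, 0 ≤ r j) →
      ENNReal.ofReal (∏ j, r j) = ∏ j, ENNReal.ofReal (r j) := fun r hr =>
    ENNReal.ofReal_prod_of_nonneg (fun j _ => hr j)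
  constructor
  · have e1 : ((N.totient : ℝ) / N) ^ n * ∏ j, (2 * δ j) =
        ∏ j : Fin n, ((N.totient : ℝ) / N * (2 * δ j)) := by
      simp only [Finset.prod_mul_distrib, Finset.prod_const, Finset.card_univ,
        Fintype.card_fin]
    rw [e1, hofReal _ (fun j => mul_nonneg (by positivity) (by linarith [hδ_pos j]))]
    exact Finset.prod_le_prod' fun j _ => (hbounds j).1
  · rw [hofReal _ (fun j => by linarith [hδ_pos j])]
    exact Finset.prod_le_prod' fun j _ => (hbounds j).2
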